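/- Fix μ ∈ ℝ and c > μ. The function g(σ) = φ((c−μ)/σ)·σ − [1 − Φ((c−μ)/σ)]·(c−μ), defined for σ > 0, is strictly increasing in σ. -/

import Mathlib

open MeasureTheory Real Set ProbabilityTheory

noncomputable def phi (t : ℝ) : ℝ := Real.exp (-t^2/2) / Real.sqrt (2*Real.pi)
noncomputable def Phi (t : ℝ) : ℝ := ∫ u in Set.Iic t, phi u

lemma phi_pos (t : ℝ) : 0 < phi t :=
  div_pos (Real.exp_pos _) (Real.sqrt_pos.mpr (by positivity))

lemma phi_continuous : Continuous phi := by
  unfold phi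
  fun_prop

lemma phi_integrable : Integrable phi := by
  have h : Integrable (fun u : ℝ => Real.exp (-(1/2) * u^2)) :=
    integrable_exp_neg_mul_sq (by norm_num)
  have := h.div_const (Real.sqrt (2*Real.pi))
  refine this.congr (Filter.Eventually.of_forall fun u => ?_)
  unfold phi
  ring_nf

lemma hasDerivAt_phi (t : ℝ) : HasDerivAt phi (-t * phi t) t := by
  have h1 : HasDerivAt (fun t : ℝ => -t^2/2) (-t) t := by
    have := ((hasDerivAt_pow 2 t).neg).div_const 2
    refine this.congr_deriv ?_
    ring
  have h2 := (h1.exp).div_const (Real.sqrt (2*Real.pi))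
  refine h2.congr_deriv ?_
  unfold phi
  ring

lemma hasDerivAt_Phi (t : ℝ) : HasDerivAt Phi (phi t) t := by
  have key : Phi = fun t => Phi 0 + ∫ u in (0:ℝ)..t, phi u := by
    funext s
    have := intervalIntegral.integral_Iic_sub_Iic (μ := volume) (phi_integrable.integrableOn)
      (phi_integrable.integrableOn) (a := 0) (b := s)
    unfold Phi
    linarith [this]
  rw [key]
  exact (HasDerivAt.const_add _ ((phi_continuous.integral_hasStrictDerivAt 0 t).hasDerivAt))

theorem stmt7 (μ c : ℝ) (hc : μ < c) :
    StrictMonoOn (fun σ : ℝ => phi ((c-μ)/σ) * σ - (1 - Phi ((c-μ)/σ)) * (c-μ))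
      (Set.Ioi 0) := by
  set a := c - μ with ha'
  have ha : 0 < a := by linarith
  have key : ∀ σ ∈ Set.Ioi (0:ℝ),
      HasDerivAt (fun σ : ℝ => phi (a/σ) * σ - (1 - Phi (a/σ)) * a)
        (phi (a/σ)) σ := by
    intro σ hσ
    have hσ0 : σ ≠ 0 := ne_of_gt hσ
    have ht : HasDerivAt (fun σ : ℝ => a/σ) (-a/σ^2) σ := by
      simpa [div_eq_mul_inv] using (hasDerivAt_inv hσ0).const_mul a
    have h1 : HasDerivAt (fun σ : ℝ => phi (a/σ))
        ((-(a/σ) * phi (a/σ)) * (-a/σ^2)) σ := (hasDerivAt_phi (a/σ)).comp σ ht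
    have h2 : HasDerivAt (fun σ : ℝ => phi (a/σ) * σ)
        ((-(a/σ) * phi (a/σ)) * (-a/σ^2) * σ + phi (a/σ) * 1) σ :=
      h1.mul (hasDerivAt_id σ)
    have h3 : HasDerivAt (fun σ : ℝ => (1 - Phi (a/σ)) * a)
        ((-(phi (a/σ) * (-a/σ^2))) * a) σ :=
      (((hasDerivAt_Phi (a/σ)).comp σ ht).const_sub 1).mul_const a
    have h4 := h2.sub h3
    refine h4.congr_deriv ?_
    field_simp
    ring
  have hconv : Convex ℝ (Set.Ioi (0:ℝ)) := convex_Ioi 0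
  apply StrictMonoOn.mono (s := interior (Set.Ioi (0:ℝ)) ∪ Set.Ioi 0) ?_ (by simp)
  · rw [interior_Ioi, Set.union_self]
    exact strictMonoOn_of_deriv_pos hconv
      (fun σ hσ => (key σ hσ).continuousAt.continuousWithinAt)
      (fun σ hσ => by
        rw [interior_Ioi] at hσ
        rw [(key σ hσ).deriv]
        exact phi_pos _)
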